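/- For any face F of 𝒜 with facial interval [m_F, M_F], one has S(m_F) = {H ∈ 𝒜 : F(H) = −} and S(M_F) = {H ∈ 𝒜 : F(H) ≤ 0}. Equivalently, for each H ∈ 𝒜: F(H) = − iff H ∈ S(m_F); F(H) = 0 iff H ∈ S(M_F) and H ∉ S(m_F); and F(H) = + iff H ∉ S(M_F). -/
import Mathlib


open scoped RealInnerProductSpace Pointwise

variable {V : Type*} [NormedAddCommGroup V] [InnerProductSpace ℝ V] [FiniteDimensional ℝ V]
  {ι : Type*} [Fintype ι]

/-- The (open) complement of the union of the hyperplanes with chosen normals `e i`. -/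
def arrComplement (e : ι → V) : Set V := {v | ∀ i, ⟪e i, v⟫ ≠ 0}

/-- A region of the arrangement: the closure of a connected component of the complement
of the union of the hyperplanes. -/
def IsRegion (e : ι → V) (R : Set V) : Prop :=
  ∃ x ∈ arrComplement e, R = closure (connectedComponentIn (arrComplement e) x)

/-- The positive closed half-space bounded by the hyperplane with normal `e i`. -/
def posHalf (e : ι → V) (i : ι) : Set V := {v | 0 ≤ ⟪e i, v⟫}

/-- The negative closed half-space bounded by the hyperplane with normal `e i`. -/
def negHalf (e : ι → V) (i : ι) : Set V := {v | ⟪e i, v⟫ ≤ 0}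

/-- The separation set of two regions: the (indices of) hyperplanes such that the two
regions lie in opposite closed half-spaces. -/
def sepSet (e : ι → V) (R R' : Set V) : Set ι :=
  {i | (R ⊆ posHalf e i ∧ R' ⊆ negHalf e i) ∨ (R ⊆ negHalf e i ∧ R' ⊆ posHalf e i)}

/-- The order of the poset of regions `PR(𝒜,B)`. -/
def PRle (e : ι → V) (B R R' : Set V) : Prop := sepSet e B R ⊆ sepSet e B R'

/-- Strict order of the poset of regions. -/
def PRlt (e : ι → V) (B R R' : Set V) : Prop := PRle e B R R' ∧ R ≠ R'

/-- Cover relation in the poset of regions. -/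
def PRcover (e : ι → V) (B R R' : Set V) : Prop :=
  PRlt e B R R' ∧ ¬ ∃ U, IsRegion e U ∧ PRlt e B R U ∧ PRlt e B U R'

/-- A face of the arrangement: an intersection of a nonempty collection of regions. -/
def IsFace (e : ι → V) (F : Set V) : Prop :=
  ∃ Rs : Set (Set V), Rs.Nonempty ∧ (∀ R ∈ Rs, IsRegion e R) ∧ F = ⋂₀ Rs

/-- `[m, M]` is the facial interval of the face `F` in the poset of regions:
the regions containing `F` are exactly those between `m` and `M`. -/
def IsFacialInterval (e : ι → V) (B F m M : Set V) : Prop :=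
  IsRegion e m ∧ IsRegion e M ∧
    ∀ R, IsRegion e R → (F ⊆ R ↔ (PRle e B m R ∧ PRle e B R M))

/-- The facial weak order `FW(𝒜,B)`: `F ≤ G` iff `m_F ≤ m_G` and `M_F ≤ M_G`
in the poset of regions. -/
def FWle (e : ι → V) (B F G : Set V) : Prop :=
  ∃ mF MF mG MG, IsFacialInterval e B F mF MF ∧ IsFacialInterval e B G mG MG ∧
    PRle e B mF mG ∧ PRle e B MF MG

/-- Strict facial weak order. -/
def FWlt (e : ι → V) (B F G : Set V) : Prop := FWle e B F G ∧ F ≠ G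

/-- Cover relation in the facial weak order. -/
def FWcover (e : ι → V) (B F G : Set V) : Prop :=
  FWlt e B F G ∧ ¬ ∃ X, IsFace e X ∧ FWlt e B F X ∧ FWlt e B X G

/-- Two faces have the same maximal region `M` of their facial intervals. -/
def SameMax (e : ι → V) (B F G : Set V) : Prop :=
  ∃ m m' M, IsFacialInterval e B F m M ∧ IsFacialInterval e B G m' M

/-- Two faces have the same minimal region `m` of their facial intervals. -/
def SameMin (e : ι → V) (B F G : Set V) : Prop :=
  ∃ m M M', IsFacialInterval e B F m M ∧ IsFacialInterval e B G m M'

/-- The dimension of a face: the dimension of its linear span. -/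
noncomputable def fdim (F : Set V) : ℕ := Module.finrank ℝ (Submodule.span ℝ F)

open Classical in
/-- The covector (sign vector) of a face: the sign of `⟪e i, x⟫` for `x` in the
relative interior of the face. -/
noncomputable def covec (e : ι → V) (F : Set V) (i : ι) : SignType :=
  if ∀ x ∈ intrinsicInterior ℝ F, 0 < ⟪e i, x⟫ then 1
  else if ∀ x ∈ intrinsicInterior ℝ F, ⟪e i, x⟫ < 0 then -1
  else 0

/-- Composition of sign vectors. -/
def scomp (f g : ι → SignType) (i : ι) : SignType := if f i ≠ 0 then f i else g i

/-- The set of roots of the arrangement: the chosen normals and their opposites. -/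
def roots (e : ι → V) : Set V := Set.range e ∪ Set.range (fun i => -(e i))

/-- The root inversion set of a face. -/
def rootInv (e : ι → V) (F : Set V) : Set V :=
  {v ∈ roots e | ∃ x ∈ intrinsicInterior ℝ F, ⟪x, v⟫ ≤ 0}

/-- `H i` is a wall of the region `R`. -/
noncomputable def IsWall (e : ι → V) (R : Set V) (i : ι) : Prop :=
  fdim ({v : V | ⟪e i, v⟫ = 0} ∩ R) = Module.finrank ℝ V - 1

/-- A region is simplicial when the normal vectors of its walls are linearly independent. -/
def IsSimplicialRegion (e : ι → V) (R : Set V) : Prop :=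
  LinearIndependent ℝ (fun i : {i : ι // IsWall e R i} => e i.1)

/-- The arrangement is simplicial when all its regions are. -/
def IsSimplicial (e : ι → V) : Prop := ∀ R, IsRegion e R → IsSimplicialRegion e R

/-- The arrangement is essential when the intersection of all its hyperplanes is `{0}`. -/
def IsEssential (e : ι → V) : Prop := (⋂ i, {v : V | ⟪e i, v⟫ = 0}) = ({0} : Set V)

/-- The poset of regions is a lattice: any two regions have a join and a meet. -/
def PRIsLattice (e : ι → V) (B : Set V) : Prop :=
  ∀ R R', IsRegion e R → IsRegion e R' →
    (∃ J, IsRegion e J ∧ PRle e B R J ∧ PRle e B R' J ∧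
      ∀ U, IsRegion e U → PRle e B R U → PRle e B R' U → PRle e B J U) ∧
    (∃ M, IsRegion e M ∧ PRle e B M R ∧ PRle e B M R' ∧
      ∀ U, IsRegion e U → PRle e B U R → PRle e B U R' → PRle e B U M)

section Helpers
variable {e : ι → V} {x : V}

noncomputable def rsgn (e : ι → V) (x : V) (i : ι) : ℝ := if 0 < ⟪e i, x⟫ then 1 else -1

lemma rsgn_mul_pos (hx : x ∈ arrComplement e) (i : ι) :
    0 < rsgn e x i * ⟪e i, x⟫ := by
  have h := hx i
  rcases lt_or_ge 0 ⟪e i, x⟫ with h' | h'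
  · rw [rsgn, if_pos h']; linarith
  · rw [rsgn, if_neg (not_lt.2 h')]
    have : ⟪e i, x⟫ < 0 := lt_of_le_of_ne h' h
    linarith

lemma rsgn_cases (e : ι → V) (x : V) (i : ι) : rsgn e x i = 1 ∨ rsgn e x i = -1 := by
  unfold rsgn; split <;> simp

lemma contInner (u : V) : Continuous fun v : V => ⟪u, v⟫ :=
  Continuous.inner continuous_const continuous_id

lemma comp_eq (hx : x ∈ arrComplement e) :
    connectedComponentIn (arrComplement e) x = {v | ∀ i, 0 < rsgn e x i * ⟪e i, v⟫} := by
  set C : Set V := {v | ∀ i, 0 < rsgn e x i * ⟪e i, v⟫} with hC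
  have hconv : Convex ℝ C := by
    have : C = ⋂ i, {v : V | 0 < rsgn e x i * ⟪e i, v⟫} := by
      ext v; simp [hC]
    rw [this]
    refine convex_iInter fun i => ?_
    have hlin : IsLinearMap ℝ fun v : V => rsgn e x i * ⟪e i, v⟫ :=
      ⟨fun a b => by rw [inner_add_right]; ring,
       fun c v => by rw [real_inner_smul_right]; simp [smul_eq_mul]; ring⟩
    exact convex_halfSpace_gt hlin 0
  have hCsub : C ⊆ arrComplement e := by
    intro v hv i
    intro h0
    have := hv i
    rw [h0, mul_zero] at this
    exact lt_irrefl 0 this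
  have hxC : x ∈ C := fun i => rsgn_mul_pos hx i
  apply subset_antisymm
  · intro v hv
    intro i
    by_contra hle
    push_neg at hle
    have hvlt : rsgn e x i * ⟪e i, v⟫ < 0 := by
      rcases lt_or_eq_of_le hle with h | h
      · exact h
      · exfalso
        have hv' : v ∈ arrComplement e := connectedComponentIn_subset _ _ hv
        rcases rsgn_cases e x i with hs | hs <;> rw [hs] at h <;>
          exact hv' i (by linarith)
    have hpre : IsPreconnected (connectedComponentIn (arrComplement e) x) :=
      isPreconnected_connectedComponentIn
    have hcont : ContinuousOn (fun v : V => rsgn e x i * ⟪e i, v⟫)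
        (connectedComponentIn (arrComplement e) x) :=
      (continuous_const.mul (contInner (e i))).continuousOn
    have hx' : x ∈ connectedComponentIn (arrComplement e) x :=
      mem_connectedComponentIn hx
    have h0mem : (0:ℝ) ∈ Set.Icc (rsgn e x i * ⟪e i, v⟫) (rsgn e x i * ⟪e i, x⟫) :=
      ⟨hvlt.le, (rsgn_mul_pos hx i).le⟩
    obtain ⟨w, hw, hw0⟩ := hpre.intermediate_value hv hx' hcont h0mem
    have hw' : w ∈ arrComplement e := connectedComponentIn_subset _ _ hw
    have hw0' : rsgn e x i * ⟪e i, w⟫ = 0 := hw0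
    refine hw' i ?_
    rcases rsgn_cases e x i with hs | hs <;> rw [hs] at hw0' <;> linarith
  · exact (hconv.isPreconnected).subset_connectedComponentIn hxC hCsub

end Helpers
section Helpers2
variable {e : ι → V} {x : V}

lemma closure_comp (hx : x ∈ arrComplement e) :
    closure (connectedComponentIn (arrComplement e) x)
      = {v | ∀ i, 0 ≤ rsgn e x i * ⟪e i, v⟫} := by
  rw [comp_eq hx]
  apply subset_antisymm
  · refine closure_minimal (fun v hv i => (hv i).le) ?_
    have : {v : V | ∀ i, 0 ≤ rsgn e x i * ⟪e i, v⟫}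
        = ⋂ i, {v : V | 0 ≤ rsgn e x i * ⟪e i, v⟫} := by ext v; simp
    rw [this]
    exact isClosed_iInter fun i =>
      isClosed_le continuous_const (continuous_const.mul (contInner (e i)))
  · intro v hv
    have htend : Filter.Tendsto (fun t : ℝ => v + t • (x - v)) (nhdsWithin 0 (Set.Ioi 0))
        (nhds v) := by
      have hc : Continuous (fun t : ℝ => v + t • (x - v)) := by continuity
      have := (hc.tendsto 0).mono_left
        (nhdsWithin_le_nhds : nhdsWithin (0:ℝ) (Set.Ioi 0) ≤ nhds 0)
      simpa using this
    refine mem_closure_of_tendsto htend ?_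
    have hIoc : Set.Ioc (0:ℝ) 1 ∈ nhdsWithin (0:ℝ) (Set.Ioi 0) :=
      Ioc_mem_nhdsGT_of_mem ⟨le_refl 0, one_pos⟩
    filter_upwards [hIoc] with t ht i
    have hxpos := rsgn_mul_pos hx i
    have hv' := hv i
    have : ⟪e i, v + t • (x - v)⟫ = ⟪e i, v⟫ + t * (⟪e i, x⟫ - ⟪e i, v⟫) := by
      rw [inner_add_right, real_inner_smul_right, inner_sub_right]
    show (0:ℝ) < _
    rw [this]
    have h1 : 0 < t := ht.1
    have h2 : t ≤ 1 := ht.2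
    nlinarith

lemma region_spec {R : Set V} (hR : IsRegion e R) :
    ∃ x ∈ arrComplement e, x ∈ R ∧ R = {v | ∀ i, 0 ≤ rsgn e x i * ⟪e i, v⟫} := by
  obtain ⟨x, hx, rfl⟩ := hR
  exact ⟨x, hx, subset_closure (mem_connectedComponentIn hx), closure_comp hx⟩

lemma region_convex {R : Set V} (hR : IsRegion e R) : Convex ℝ R := by
  obtain ⟨x, hx, -, rfl⟩ := region_spec hR
  have : {v : V | ∀ i, 0 ≤ rsgn e x i * ⟪e i, v⟫}
      = ⋂ i, {v : V | 0 ≤ rsgn e x i * ⟪e i, v⟫} := by ext v; simp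
  rw [this]
  refine convex_iInter fun i => ?_
  have hlin : IsLinearMap ℝ fun v : V => rsgn e x i * ⟪e i, v⟫ :=
    ⟨fun a b => by rw [inner_add_right]; ring,
     fun c v => by rw [real_inner_smul_right]; simp [smul_eq_mul]; ring⟩
  exact convex_halfSpace_ge hlin 0

lemma region_zero_mem {R : Set V} (hR : IsRegion e R) : (0:V) ∈ R := by
  obtain ⟨x, hx, -, rfl⟩ := region_spec hR
  intro i
  simp

/-- If a region contains a point with negative inner product against `e i`,
it lies in the negative half-space. -/
lemma region_negHalf {R : Set V} (hR : IsRegion e R) {v : V} (hv : v ∈ R)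
    {i : ι} (hneg : ⟪e i, v⟫ < 0) : R ⊆ negHalf e i := by
  obtain ⟨x, hx, -, rfl⟩ := region_spec hR
  have hs : rsgn e x i = -1 := by
    rcases rsgn_cases e x i with hs | hs
    · exfalso; have := hv i; rw [hs] at this; linarith
    · exact hs
  intro w hw
  have := hw i
  rw [hs] at this
  simpa [negHalf] using by linarith

end Helpers2
section Helpers3
variable {e : ι → V}

/-- From a relative interior point one can move slightly away from any point of the set. -/
lemma relint_extend {F : Set V} {x y : V} (hx : x ∈ intrinsicInterior ℝ F) (hy : y ∈ F) :
    ∀ᶠ t in nhdsWithin (0:ℝ) (Set.Ioi 0), x + t • (x - y) ∈ F := by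
  obtain ⟨x', hx', hxx⟩ := hx
  have hxA : x ∈ affineSpan ℝ F := hxx ▸ x'.2
  have hyA : y ∈ affineSpan ℝ F := subset_affineSpan ℝ F hy
  have hmemA : ∀ t : ℝ, x + t • (x - y) ∈ affineSpan ℝ F := by
    intro t
    have := AffineSubspace.smul_vsub_vadd_mem (affineSpan ℝ F) t hxA hyA hxA
    simpa [vsub_eq_sub, vadd_eq_add, add_comm] using this
  have hnb : ((↑) ⁻¹' F : Set (affineSpan ℝ F)) ∈ nhds x' :=
    mem_interior_iff_mem_nhds.1 hx'
  rw [nhds_subtype_eq_comap, Filter.mem_comap] at hnb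
  obtain ⟨U, hU, hUF⟩ := hnb
  rw [hxx] at hU
  have hc : Continuous (fun t : ℝ => x + t • (x - y)) := by continuity
  have htend : Filter.Tendsto (fun t : ℝ => x + t • (x - y))
      (nhdsWithin 0 (Set.Ioi 0)) (nhds x) := by
    have := (hc.tendsto 0).mono_left
      (nhdsWithin_le_nhds : nhdsWithin (0:ℝ) (Set.Ioi 0) ≤ nhds 0)
    simpa using this
  filter_upwards [htend hU] with t ht
  exact hUF (Set.mem_preimage.2 (show ((⟨x + t • (x - y), hmemA t⟩ : affineSpan ℝ F) : V) ∈ U from ht))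

/-- Characterization of the separation set when the base point has all-positive inner products. -/
lemma sep_char {B R : Set V} {b : V} (hb : b ∈ B) (hbpos : ∀ i, 0 < ⟪e i, b⟫)
    (hBpos : ∀ i, B ⊆ posHalf e i) (i : ι) :
    i ∈ sepSet e B R ↔ R ⊆ negHalf e i := by
  constructor
  · rintro (⟨-, h⟩ | ⟨hBneg, -⟩)
    · exact h
    · exact absurd (hBneg hb) (by simp [negHalf]; exact hbpos i)
  · intro h
    exact Or.inl ⟨hBpos i, h⟩

end Helpers3
section Helpers4
variable {e : ι → V}

lemma tri_lemma {F : Set V} {i : ι} {c : ℝ}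
    (hc : c = 1 ∨ c = -1) (hF0 : ∀ v ∈ F, 0 ≤ c * ⟪e i, v⟫) :
    (∀ x ∈ intrinsicInterior ℝ F, 0 < c * ⟪e i, x⟫) ∨ (∀ v ∈ F, ⟪e i, v⟫ = 0) := by
  by_cases hall : ∀ x ∈ intrinsicInterior ℝ F, 0 < c * ⟪e i, x⟫
  · exact Or.inl hall
  push_neg at hall
  obtain ⟨x, hxr, hxle⟩ := hall
  have hxF : x ∈ F := intrinsicInterior_subset hxr
  have hx0 : ⟪e i, x⟫ = 0 := by
    have h0 : c * ⟪e i, x⟫ = 0 := le_antisymm hxle (hF0 x hxF)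
    rcases hc with rfl | rfl <;> linarith
  refine Or.inr fun v hv => ?_
  by_contra hfv
  have hcv : 0 < c * ⟪e i, v⟫ := by
    have h1 := hF0 v hv
    rcases lt_or_eq_of_le h1 with h | h
    · exact h
    · exfalso; rcases hc with rfl | rfl <;> [exact hfv (by linarith); exact hfv (by linarith)]
  obtain ⟨t, htF, htpos⟩ :=
    ((relint_extend hxr hv).and (eventually_mem_nhdsWithin)).exists
  have htpos' : (0:ℝ) < t := htpos
  have hcontr := hF0 _ htF
  have hexp : ⟪e i, x + t • (x - v)⟫ = ⟪e i, x⟫ + t * (⟪e i, x⟫ - ⟪e i, v⟫) := by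
    rw [inner_add_right, real_inner_smul_right, inner_sub_right]
  rw [hexp, hx0] at hcontr
  nlinarith

lemma tendsto_aff (a c : ℝ) :
    Filter.Tendsto (fun ε : ℝ => a + ε * c) (nhdsWithin (0:ℝ) (Set.Ioi 0)) (nhds a) := by
  have hcon : Continuous fun ε : ℝ => a + ε * c := by continuity
  have := (hcon.tendsto 0).mono_left
    (nhdsWithin_le_nhds : nhdsWithin (0:ℝ) (Set.Ioi 0) ≤ nhds 0)
  simpa using this

lemma signType_aux (s : SignType) : s ≤ 0 ∧ s ≠ -1 ↔ s = 0 := by cases s <;> decide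

lemma signType_aux2 (s : SignType) : ¬ s ≤ 0 ↔ s = 1 := by cases s <;> decide

end Helpers4
/-- `S(m_F) = {H : F(H) = -}` and `S(M_F) = {H : F(H) ≤ 0}`. -/
theorem stmt6 (e : ι → V) (hne : ∀ i, e i ≠ 0) (B : Set V)
    (hB : IsRegion e B) (hBpos : ∀ i, B ⊆ posHalf e i)
    (F mF MF : Set V) (hF : IsFace e F)
    (hFI : IsFacialInterval e B F mF MF) :
    sepSet e B mF = {i | covec e F i = -1} ∧
    sepSet e B MF = {i | covec e F i ≤ 0} ∧
    (∀ i, (covec e F i = -1 ↔ i ∈ sepSet e B mF) ∧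
      (covec e F i = 0 ↔ (i ∈ sepSet e B MF ∧ i ∉ sepSet e B mF)) ∧
      (covec e F i = 1 ↔ i ∉ sepSet e B MF)) := by
  classical
  obtain ⟨b, hbArr, hbB, hBeq⟩ := region_spec hB
  have hbpos : ∀ i, 0 < ⟪e i, b⟫ := fun i =>
    lt_of_le_of_ne (hBpos i hbB) (Ne.symm (hbArr i))
  obtain ⟨hmreg, hMreg, hint⟩ := hFI
  obtain ⟨Rs, ⟨R0, hR0⟩, hRsreg, hFeq⟩ := hF
  have hFR0 : F ⊆ R0 := hFeq ▸ Set.sInter_subset_of_mem hR0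
  obtain ⟨hm0, h0M⟩ := (hint R0 (hRsreg R0 hR0)).1 hFR0
  have hmM : PRle e B mF MF := fun i hi => h0M (hm0 hi)
  have hFm : F ⊆ mF := (hint mF hmreg).2 ⟨fun i hi => hi, hmM⟩
  have hFM : F ⊆ MF := (hint MF hMreg).2 ⟨hmM, fun i hi => hi⟩
  have hFconv : Convex ℝ F := hFeq ▸ convex_sInter fun R hR => region_convex (hRsreg R hR)
  have hF0mem : (0:V) ∈ F := hFeq ▸ Set.mem_sInter.2 fun R hR => region_zero_mem (hRsreg R hR)
  obtain ⟨z, hz⟩ := Set.Nonempty.intrinsicInterior hFconv ⟨0, hF0mem⟩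
  have hzF : z ∈ F := intrinsicInterior_subset hz
  -- trichotomy for each hyperplane
  have tri3 : ∀ i, ((∀ x ∈ intrinsicInterior ℝ F, 0 < ⟪e i, x⟫) ∧ ∀ v ∈ F, 0 ≤ ⟪e i, v⟫)
      ∨ ((∀ x ∈ intrinsicInterior ℝ F, ⟪e i, x⟫ < 0) ∧ ∀ v ∈ F, ⟪e i, v⟫ ≤ 0)
      ∨ (∀ v ∈ F, ⟪e i, v⟫ = 0) := by
    intro i
    obtain ⟨x0, hx0Arr, -, hR0eq⟩ := region_spec (hRsreg R0 hR0)
    have hF0 : ∀ v ∈ F, 0 ≤ rsgn e x0 i * ⟪e i, v⟫ := by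
      intro v hv
      have hvR := hFR0 hv
      rw [hR0eq] at hvR
      exact hvR i
    rcases tri_lemma (rsgn_cases e x0 i) hF0 with h | h
    · rcases rsgn_cases e x0 i with hs | hs
      · refine Or.inl ⟨fun x hx => ?_, fun v hv => ?_⟩
        · have := h x hx; rw [hs] at this; linarith
        · have := hF0 v hv; rw [hs] at this; linarith
      · refine Or.inr (Or.inl ⟨fun x hx => ?_, fun v hv => ?_⟩)
        · have := h x hx; rw [hs] at this; linarith
        · have := hF0 v hv; rw [hs] at this; linarith
    · exact Or.inr (Or.inr h)
  -- covec values in the three cases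
  have hcovP : ∀ i, (∀ x ∈ intrinsicInterior ℝ F, 0 < ⟪e i, x⟫) → covec e F i = 1 := by
    intro i h; unfold covec; rw [if_pos h]
  have hcovN : ∀ i, (∀ x ∈ intrinsicInterior ℝ F, ⟪e i, x⟫ < 0) → covec e F i = -1 := by
    intro i h
    have h1 : ¬ ∀ x ∈ intrinsicInterior ℝ F, 0 < ⟪e i, x⟫ :=
      fun hall => lt_asymm (h z hz) (hall z hz)
    unfold covec; rw [if_neg h1, if_pos h]
  have hcovZ : ∀ i, (∀ v ∈ F, ⟪e i, v⟫ = 0) → covec e F i = 0 := by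
    intro i h
    have hz0 : ⟪e i, z⟫ = 0 := h z hzF
    have h1 : ¬ ∀ x ∈ intrinsicInterior ℝ F, 0 < ⟪e i, x⟫ :=
      fun hall => by have := hall z hz; rw [hz0] at this; exact lt_irrefl 0 this
    have h2 : ¬ ∀ x ∈ intrinsicInterior ℝ F, ⟪e i, x⟫ < 0 :=
      fun hall => by have := hall z hz; rw [hz0] at this; exact lt_irrefl 0 this
    unfold covec; rw [if_neg h1, if_neg h2]
  -- perturbation towards the base region: point p = z + ε • b
  have hev1 : ∀ᶠ ε in nhdsWithin (0:ℝ) (Set.Ioi 0), ∀ i,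
      (⟪e i, z⟫ < 0 → ⟪e i, z + ε • b⟫ < 0) ∧ (0 ≤ ⟪e i, z⟫ → 0 < ⟪e i, z + ε • b⟫) := by
    rw [Filter.eventually_all]
    intro i
    have hinner : ∀ ε : ℝ, ⟪e i, z + ε • b⟫ = ⟪e i, z⟫ + ε * ⟪e i, b⟫ := fun ε => by
      rw [inner_add_right, real_inner_smul_right]
    have hA : ∀ᶠ ε in nhdsWithin (0:ℝ) (Set.Ioi 0),
        (⟪e i, z⟫ < 0 → ⟪e i, z + ε • b⟫ < 0) := by
      by_cases hneg : ⟪e i, z⟫ < 0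
      · have ht := tendsto_aff ⟪e i, z⟫ ⟪e i, b⟫ (Iio_mem_nhds hneg)
        filter_upwards [ht] with ε hε _
        rw [hinner]; exact hε
      · filter_upwards with ε; exact fun h => absurd h hneg
    have hB' : ∀ᶠ ε in nhdsWithin (0:ℝ) (Set.Ioi 0),
        (0 ≤ ⟪e i, z⟫ → 0 < ⟪e i, z + ε • b⟫) := by
      filter_upwards [eventually_mem_nhdsWithin] with ε hε h
      have : (0:ℝ) < ε := hε
      rw [hinner]; nlinarith [hbpos i]
    exact hA.and hB'
  obtain ⟨ε, hε, hεpos⟩ := (hev1.and eventually_mem_nhdsWithin).exists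
  set p := z + ε • b with hp
  have hpArr : p ∈ arrComplement e := by
    intro i
    rcases lt_or_ge ⟪e i, z⟫ 0 with h | h
    · exact ne_of_lt ((hε i).1 h)
    · exact ne_of_gt ((hε i).2 h)
  set Rp := closure (connectedComponentIn (arrComplement e) p) with hRp
  have hRpreg : IsRegion e Rp := ⟨p, hpArr, rfl⟩
  have hpRp : p ∈ Rp := subset_closure (mem_connectedComponentIn hpArr)
  have hFRp : F ⊆ Rp := by
    intro v hv
    rw [hRp, closure_comp hpArr]
    intro i
    rcases tri3 i with ⟨hpp, hge⟩ | ⟨hn, hle⟩ | hz0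
    · have hfp : 0 < ⟪e i, p⟫ := (hε i).2 (hpp z hz).le
      rw [rsgn, if_pos hfp, one_mul]; exact hge v hv
    · have hfp : ⟪e i, p⟫ < 0 := (hε i).1 (hn z hz)
      rw [rsgn, if_neg (not_lt.2 hfp.le)]
      have := hle v hv; linarith
    · have hfp : 0 < ⟪e i, p⟫ := (hε i).2 (le_of_eq (hz0 z hzF).symm)
      rw [rsgn, if_pos hfp, one_mul, hz0 v hv]
  have hmRp : sepSet e B mF ⊆ sepSet e B Rp := ((hint Rp hRpreg).1 hFRp).1
  -- perturbation away from the base region: point q = z - ε' • b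
  have hev2 : ∀ᶠ ε in nhdsWithin (0:ℝ) (Set.Ioi 0), ∀ i,
      (0 < ⟪e i, z⟫ → 0 < ⟪e i, z - ε • b⟫) ∧ (⟪e i, z⟫ ≤ 0 → ⟪e i, z - ε • b⟫ < 0) := by
    rw [Filter.eventually_all]
    intro i
    have hinner : ∀ ε : ℝ, ⟪e i, z - ε • b⟫ = ⟪e i, z⟫ + ε * (-⟪e i, b⟫) := fun ε => by
      rw [inner_sub_right, real_inner_smul_right]; ring
    have hA : ∀ᶠ ε in nhdsWithin (0:ℝ) (Set.Ioi 0),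
        (0 < ⟪e i, z⟫ → 0 < ⟪e i, z - ε • b⟫) := by
      by_cases hpos : 0 < ⟪e i, z⟫
      · have ht := tendsto_aff ⟪e i, z⟫ (-⟪e i, b⟫) (Ioi_mem_nhds hpos)
        filter_upwards [ht] with ε hε _
        rw [hinner]; exact hε
      · filter_upwards with ε; exact fun h => absurd h hpos
    have hB' : ∀ᶠ ε in nhdsWithin (0:ℝ) (Set.Ioi 0),
        (⟪e i, z⟫ ≤ 0 → ⟪e i, z - ε • b⟫ < 0) := by
      filter_upwards [eventually_mem_nhdsWithin] with ε hε h
      have : (0:ℝ) < ε := hε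
      rw [hinner]; nlinarith [hbpos i]
    exact hA.and hB'
  obtain ⟨δ, hδ, hδpos⟩ := (hev2.and eventually_mem_nhdsWithin).exists
  set q := z - δ • b with hq
  have hqArr : q ∈ arrComplement e := by
    intro i
    rcases lt_or_ge 0 ⟪e i, z⟫ with h | h
    · exact ne_of_gt ((hδ i).1 h)
    · exact ne_of_lt ((hδ i).2 h)
  set Rq := closure (connectedComponentIn (arrComplement e) q) with hRq
  have hRqreg : IsRegion e Rq := ⟨q, hqArr, rfl⟩
  have hqRq : q ∈ Rq := subset_closure (mem_connectedComponentIn hqArr)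
  have hFRq : F ⊆ Rq := by
    intro v hv
    rw [hRq, closure_comp hqArr]
    intro i
    rcases tri3 i with ⟨hpp, hge⟩ | ⟨hn, hle⟩ | hz0
    · have hfq : 0 < ⟪e i, q⟫ := (hδ i).1 (hpp z hz)
      rw [rsgn, if_pos hfq, one_mul]; exact hge v hv
    · have hfq : ⟪e i, q⟫ < 0 := (hδ i).2 (hn z hz).le
      rw [rsgn, if_neg (not_lt.2 hfq.le)]
      have := hle v hv; linarith
    · have hfq : ⟪e i, q⟫ < 0 := (hδ i).2 (le_of_eq (hz0 z hzF))
      rw [rsgn, if_neg (not_lt.2 hfq.le), hz0 v hv]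
      simp
  have hRqM : sepSet e B Rq ⊆ sepSet e B MF := ((hint Rq hRqreg).1 hFRq).2
  -- the two membership characterizations
  have hsep_m : ∀ i, i ∈ sepSet e B mF ↔ covec e F i = -1 := by
    intro i
    constructor
    · intro hi
      have hRpneg : Rp ⊆ negHalf e i := (sep_char hbB hbpos hBpos i).1 (hmRp hi)
      have hple : ⟪e i, p⟫ ≤ 0 := hRpneg hpRp
      rcases tri3 i with ⟨hpp, -⟩ | ⟨hn, -⟩ | hz0
      · exact absurd hple (not_le.2 ((hε i).2 (hpp z hz).le))
      · exact hcovN i hn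
      · exact absurd hple (not_le.2 ((hε i).2 (le_of_eq (hz0 z hzF).symm)))
    · intro hcv
      rcases tri3 i with ⟨hpp, -⟩ | ⟨hn, -⟩ | hz0
      · rw [hcovP i hpp] at hcv; exact absurd hcv (by decide)
      · have hmneg : mF ⊆ negHalf e i := region_negHalf hmreg (hFm hzF) (hn z hz)
        exact (sep_char hbB hbpos hBpos i).2 hmneg
      · rw [hcovZ i hz0] at hcv; exact absurd hcv (by decide)
  have hsep_M : ∀ i, i ∈ sepSet e B MF ↔ covec e F i ≤ 0 := by
    intro i
    constructor
    · intro hi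
      have hMneg : MF ⊆ negHalf e i := (sep_char hbB hbpos hBpos i).1 hi
      have hzle : ⟪e i, z⟫ ≤ 0 := hMneg (hFM hzF)
      rcases tri3 i with ⟨hpp, -⟩ | ⟨hn, -⟩ | hz0
      · exact absurd hzle (not_le.2 (hpp z hz))
      · rw [hcovN i hn]; decide
      · rw [hcovZ i hz0]
    · intro hcv
      rcases tri3 i with ⟨hpp, -⟩ | ⟨hn, -⟩ | hz0
      · rw [hcovP i hpp] at hcv; exact absurd hcv (by decide)
      · have hfq : ⟪e i, q⟫ < 0 := (hδ i).2 (hn z hz).le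
        exact hRqM ((sep_char hbB hbpos hBpos i).2 (region_negHalf hRqreg hqRq hfq))
      · have hfq : ⟪e i, q⟫ < 0 := (hδ i).2 (le_of_eq (hz0 z hzF))
        exact hRqM ((sep_char hbB hbpos hBpos i).2 (region_negHalf hRqreg hqRq hfq))
  refine ⟨Set.ext fun i => hsep_m i, Set.ext fun i => hsep_M i, fun i => ?_⟩
  refine ⟨(hsep_m i).symm, ?_, ?_⟩
  · rw [← signType_aux (covec e F i)]
    constructor
    · rintro ⟨h1, h2⟩; exact ⟨(hsep_M i).mpr h1, fun hm => h2 ((hsep_m i).mp hm)⟩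
    · rintro ⟨h1, h2⟩; exact ⟨(hsep_M i).mp h1, fun hv => h2 ((hsep_m i).mpr hv)⟩
  · rw [← signType_aux2 (covec e F i)]
    exact (not_congr (hsep_M i)).symm
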